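/- Let H be an orientation of the path on four vertices and let D be an H-free oriented graph. Suppose V(D) is partitioned into sets Q, R, S such that there is no arc between Q and S, every r ∈ R has both an in-neighbor and an out-neighbor in Q, and every s ∈ S has a neighbor in R. Let γ be an integer such that χ⃗(N(r)) ≤ γ for every r ∈ R. Then χ⃗(S) ≤ 2γ. -/

import Mathlib

namespace DichiP4

variable {V : Type*}

/-- An oriented graph: an arc relation with no digons (hence also no loops). -/
def Oriented (A : V → V → Prop) : Prop := ∀ u v, A u v → ¬ A v u

/-- Adjacency in the underlying (undirected) graph. -/
def Adj (A : V → V → Prop) (u v : V) : Prop := A u v ∨ A v u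

/-- The neighborhood `N(v)` of a vertex in the underlying graph. -/
def nbr (A : V → V → Prop) (v : V) : Set V := {w | Adj A v w}

/-- `N(S)`: the neighborhood of a set of vertices. -/
def nbrSet (A : V → V → Prop) (S : Set V) : Set V := (⋃ v ∈ S, nbr A v) \ S

/-- `N[S]`: the closed neighborhood of a set of vertices. -/
def cnbrSet (A : V → V → Prop) (S : Set V) : Set V := ⋃ v ∈ S, insert v (nbr A v)

/-- A clique in the underlying graph (= the vertex set of a tournament). -/
def IsClique (A : V → V → Prop) (K : Set V) : Prop :=
  ∀ u ∈ K, ∀ v ∈ K, u ≠ v → Adj A u v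

/-- The clique number `ω(D)` of the underlying graph. -/
noncomputable def cliqueNum (A : V → V → Prop) : ℕ :=
  sSup {n | ∃ K : Set V, IsClique A K ∧ K.Finite ∧ K.ncard = n}

/-- The set `s` induces an acyclic subdigraph (no directed cycle within `s`). -/
def AcyclicOn (A : V → V → Prop) (s : Set V) : Prop :=
  ∀ v, ¬ Relation.TransGen (fun x y => x ∈ s ∧ y ∈ s ∧ A x y) v v

/-- The set `s` admits a dicoloring with `k` colors: every color class induces an
acyclic subdigraph. -/
def DicolorableOn (A : V → V → Prop) (s : Set V) (k : ℕ) : Prop :=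
  ∃ c : V → ℕ, (∀ v ∈ s, c v < k) ∧ ∀ i : ℕ, AcyclicOn A {v | v ∈ s ∧ c v = i}

/-- The dichromatic number `χ⃗(s)` of the subdigraph induced by `s`. -/
noncomputable def dichi (A : V → V → Prop) (s : Set V) : ℕ :=
  sInf {k | DicolorableOn A s k}

/-- `A` has an induced subdigraph isomorphic to `B`. -/
def HasInducedCopy {W : Type*} (A : V → V → Prop) (B : W → W → Prop) : Prop :=
  ∃ f : W → V, Function.Injective f ∧ ∀ x y : W, B x y ↔ A (f x) (f y)

/-- `A` is `B`-free: no induced subdigraph of `A` is isomorphic to `B`. -/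
def Free {W : Type*} (A : V → V → Prop) (B : W → W → Prop) : Prop :=
  ¬ HasInducedCopy A B

/-- `P⃗4`: the orientation of the path `0 – 1 – 2 – 3` with arcs `0→1, 1→2, 2→3`. -/
def P4vec : Fin 4 → Fin 4 → Prop := fun x y =>
  (x = 0 ∧ y = 1) ∨ (x = 1 ∧ y = 2) ∨ (x = 2 ∧ y = 3)

/-- `A⃗4`: the orientation of the path `0 – 1 – 2 – 3` with arcs `1→0, 1→2, 3→2`. -/
def A4vec : Fin 4 → Fin 4 → Prop := fun x y =>
  (x = 1 ∧ y = 0) ∨ (x = 1 ∧ y = 2) ∨ (x = 3 ∧ y = 2)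

/-- `Q⃗4`: the orientation of the path `0 – 1 – 2 – 3` with arcs `0→1, 2→1, 3→2`. -/
def Q4vec : Fin 4 → Fin 4 → Prop := fun x y =>
  (x = 0 ∧ y = 1) ∨ (x = 2 ∧ y = 1) ∨ (x = 3 ∧ y = 2)

/-- `Q⃗4'`: the orientation of the path `0 – 1 – 2 – 3` with arcs `1→0, 2→1, 2→3`. -/
def Q4'vec : Fin 4 → Fin 4 → Prop := fun x y =>
  (x = 1 ∧ y = 0) ∨ (x = 2 ∧ y = 1) ∨ (x = 2 ∧ y = 3)

/-- `B` is an orientation of the path on four vertices `0 – 1 – 2 – 3`. -/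
def IsP4Orientation (B : Fin 4 → Fin 4 → Prop) : Prop :=
  Oriented B ∧ ∀ x y : Fin 4, Adj B x y ↔ ((x : ℕ) + 1 = (y : ℕ) ∨ (y : ℕ) + 1 = (x : ℕ))

/-- `p 1 → p 2 → ⋯ → p ℓ` is a directed path in `A` (distinct vertices). -/
def IsDirPath (A : V → V → Prop) (ℓ : ℕ) (p : ℕ → V) : Prop :=
  1 ≤ ℓ ∧ Set.InjOn p (Set.Icc 1 ℓ) ∧ ∀ i, 1 ≤ i → i < ℓ → A (p i) (p (i + 1))

/-- A directed path `p 1 → ⋯ → p ℓ` is forward-induced: no arc `(p i, p j)` with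
`j > i + 1`. -/
def ForwardInduced (A : V → V → Prop) (ℓ : ℕ) (p : ℕ → V) : Prop :=
  ∀ i j, 1 ≤ i → j ≤ ℓ → i + 1 < j → ¬ A (p i) (p j)

/-- `p 1 → ⋯ → p ℓ` is a shortest directed path from `p 1` to `p ℓ`. -/
def IsShortestDirPath (A : V → V → Prop) (ℓ : ℕ) (p : ℕ → V) : Prop :=
  IsDirPath A ℓ p ∧
    ∀ (m : ℕ) (q : ℕ → V), IsDirPath A m q → q 1 = p 1 → q m = p ℓ → ℓ ≤ m

/-- The vertex set `V(P)` of the path `p 1, …, p ℓ`. -/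
def pathSet (ℓ : ℕ) (p : ℕ → V) : Set V := p '' Set.Icc 1 ℓ

/-- `N(P)`: the neighborhood of the vertex set of the path. -/
def pathNbrs (A : V → V → Prop) (ℓ : ℕ) (p : ℕ → V) : Set V := nbrSet A (pathSet ℓ p)

/-- `F i`: vertices of `N(P)` whose first neighbor on the path is `p i`. -/
def Fatt (A : V → V → Prop) (ℓ : ℕ) (p : ℕ → V) (i : ℕ) : Set V :=
  {v ∈ pathNbrs A ℓ p | Adj A v (p i) ∧ ∀ i', 1 ≤ i' → i' < i → ¬ Adj A v (p i')}

/-- `L j`: vertices of `N(P)` whose last neighbor on the path is `p j`. -/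
def Latt (A : V → V → Prop) (ℓ : ℕ) (p : ℕ → V) (j : ℕ) : Set V :=
  {v ∈ pathNbrs A ℓ p | Adj A v (p j) ∧ ∀ j', j < j' → j' ≤ ℓ → ¬ Adj A v (p j')}

/-- `F i ⁺`: in-neighbors of `p i` in `F i`. -/
def FattP (A : V → V → Prop) (ℓ : ℕ) (p : ℕ → V) (i : ℕ) : Set V :=
  {v ∈ Fatt A ℓ p i | A v (p i)}

/-- `F i ⁻`: out-neighbors of `p i` in `F i`. -/
def FattM (A : V → V → Prop) (ℓ : ℕ) (p : ℕ → V) (i : ℕ) : Set V :=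
  {v ∈ Fatt A ℓ p i | A (p i) v}

/-- `L j ⁺`: in-neighbors of `p j` in `L j`. -/
def LattP (A : V → V → Prop) (ℓ : ℕ) (p : ℕ → V) (j : ℕ) : Set V :=
  {v ∈ Latt A ℓ p j | A v (p j)}

/-- `L j ⁻`: out-neighbors of `p j` in `L j`. -/
def LattM (A : V → V → Prop) (ℓ : ℕ) (p : ℕ → V) (j : ℕ) : Set V :=
  {v ∈ Latt A ℓ p j | A (p j) v}

/-- `W^p = (F₂⁻ ∪ ⋯ ∪ F_{ℓ-1}⁻) ∪ (L₂⁺ ∪ ⋯ ∪ L_{ℓ-1}⁺)`. -/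
def Wp (A : V → V → Prop) (ℓ : ℕ) (p : ℕ → V) : Set V :=
  (⋃ i ∈ Set.Icc 2 (ℓ - 1), FattM A ℓ p i) ∪ ⋃ i ∈ Set.Icc 2 (ℓ - 1), LattP A ℓ p i

/-- `W^a = (F₂⁺ ∪ ⋯ ∪ F_{ℓ-1}⁺) ∪ (L₂⁻ ∪ ⋯ ∪ L_{ℓ-1}⁻)`. -/
def Wa (A : V → V → Prop) (ℓ : ℕ) (p : ℕ → V) : Set V :=
  (⋃ i ∈ Set.Icc 2 (ℓ - 1), FattP A ℓ p i) ∪ ⋃ i ∈ Set.Icc 2 (ℓ - 1), LattM A ℓ p i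

/-- `R^p = N(P) \ (N({p1, p2, pℓ}) ∪ W^p)`. -/
def Rp (A : V → V → Prop) (ℓ : ℕ) (p : ℕ → V) : Set V :=
  pathNbrs A ℓ p \ (nbrSet A {p 1, p 2, p ℓ} ∪ Wp A ℓ p)

/-- `R^a = N(P) \ (N({p1, pℓ}) ∪ W^a)`. -/
def Ra (A : V → V → Prop) (ℓ : ℕ) (p : ℕ → V) : Set V :=
  pathNbrs A ℓ p \ (nbrSet A {p 1, p ℓ} ∪ Wa A ℓ p)

/-- A dipolar set: a nonempty set `S` partitioned into `S⁺` (no out-neighbor outside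
`S`) and `S⁻` (no in-neighbor outside `S`). -/
def IsDipolar (A : V → V → Prop) (S : Set V) : Prop :=
  S.Nonempty ∧ ∃ Sp Sm : Set V, Sp ∪ Sm = S ∧ Disjoint Sp Sm ∧
    (∀ v ∈ Sp, ∀ w, w ∉ S → ¬ A v w) ∧ ∀ v ∈ Sm, ∀ w, w ∉ S → ¬ A w v

/-- Reachability by a directed path staying inside `s`. -/
def ReachIn (A : V → V → Prop) (s : Set V) (u v : V) : Prop :=
  Relation.ReflTransGen (fun x y => x ∈ s ∧ y ∈ s ∧ A x y) u v

/-- A digraph is strongly connected. -/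
def StronglyConnected (A : V → V → Prop) : Prop :=
  ∀ u v : V, Relation.ReflTransGen A u v

/-- `t` is a strongly connected component of the subdigraph induced by `s`. -/
def IsSCCOf (A : V → V → Prop) (s t : Set V) : Prop :=
  t ⊆ s ∧ t.Nonempty ∧ (∀ u ∈ t, ∀ v ∈ t, ReachIn A s u v) ∧
    ∀ u ∈ t, ∀ v ∈ s, ReachIn A s u v → ReachIn A s v u → v ∈ t

/-- A source strongly connected component: all arcs between it and the rest of `s`
begin in it. -/
def IsSourceSCC (A : V → V → Prop) (s t : Set V) : Prop :=
  IsSCCOf A s t ∧ ∀ u ∈ s, ∀ v ∈ t, A u v → u ∈ t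

/-- A sink strongly connected component: all arcs between it and the rest of `s`
end in it. -/
def IsSinkSCC (A : V → V → Prop) (s t : Set V) : Prop :=
  IsSCCOf A s t ∧ ∀ u ∈ t, ∀ v ∈ s, A u v → v ∈ t

/-- `K` (a tournament of maximum order) and the directed path `p 1 → ⋯ → p ℓ`
(from a source SCC of `D[K]` to a sink SCC of `D[K]`) form a closed tournament
`C = K ∪ V(P)`. -/
def FormsClosedTournament (A : V → V → Prop) (K : Set V) (ℓ : ℕ) (p : ℕ → V) : Prop :=
  IsClique A K ∧ K.Finite ∧ K.ncard = cliqueNum A ∧ IsDirPath A ℓ p ∧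
    (∃ t, IsSourceSCC A K t ∧ p 1 ∈ t) ∧ ∃ t, IsSinkSCC A K t ∧ p ℓ ∈ t

/-- `K` and `P` form a path-minimizing closed tournament: `|P|` is minimum among
all pairs forming a closed tournament. -/
def FormsPathMinClosedTournament (A : V → V → Prop) (K : Set V) (ℓ : ℕ) (p : ℕ → V) :
    Prop :=
  FormsClosedTournament A K ℓ p ∧
    ∀ (K' : Set V) (ℓ' : ℕ) (p' : ℕ → V), FormsClosedTournament A K' ℓ' p' → ℓ ≤ ℓ'

/-- The strong neighborhood of `S`: neighbors of `S` having both an in-neighbor and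
an out-neighbor in `S`. -/
def strongNbrs (A : V → V → Prop) (S : Set V) : Set V :=
  {v ∈ nbrSet A S | (∃ u ∈ S, A u v) ∧ ∃ u ∈ S, A v u}

variable {A : V → V → Prop}

lemma adj_swap {u v : V} (h : Adj A u v) : Adj A v u := h.elim Or.inr Or.inl

lemma not_arc_self (hA : Oriented A) (v : V) : ¬ A v v := fun h => hA v v h h

lemma dicolorableOn_mono {s : Set V} {k k' : ℕ} (hkk : k ≤ k')
    (h : DicolorableOn A s k) : DicolorableOn A s k' := by
  obtain ⟨c, hc1, hc2⟩ := h
  exact ⟨c, fun v hv => lt_of_lt_of_le (hc1 v hv) hkk, hc2⟩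

lemma dicolorableOn_card [Fintype V] (hA : Oriented A) (s : Set V) :
    DicolorableOn A s (Fintype.card V) := by
  refine ⟨fun v => (Fintype.equivFin V v : ℕ), fun v _ => (Fintype.equivFin V v).isLt, ?_⟩
  intro i v hv
  obtain ⟨b, hb, -⟩ := (Relation.TransGen.head'_iff).mp hv
  obtain ⟨⟨-, hv1⟩, ⟨-, hb1⟩, harc⟩ := hb
  have : v = b := (Fintype.equivFin V).injective (Fin.val_injective (hv1.trans hb1.symm))
  exact not_arc_self hA v (this ▸ harc)

lemma exists_dicolor [Fintype V] (hA : Oriented A) {s : Set V} {k : ℕ}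
    (h : dichi A s ≤ k) : DicolorableOn A s k := by
  have hne : {m | DicolorableOn A s m}.Nonempty := ⟨_, dicolorableOn_card hA s⟩
  exact dicolorableOn_mono h (Nat.sInf_mem hne)

lemma transGen_le {α : Type*} {P : α → α → Prop} {g : α → ℕ}
    (mono : ∀ x y, P x y → g y ≤ g x) {a b : α} (h : Relation.TransGen P a b) :
    g b ≤ g a := by
  induction h with
  | single h => exact mono _ _ h
  | tail _ h ih => exact le_trans (mono _ _ h) ih

lemma cycle_eq {α : Type*} {P : α → α → Prop} {g : α → ℕ}
    (mono : ∀ x y, P x y → g y ≤ g x) {v : α} (h : Relation.TransGen P v v) :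
    Relation.TransGen (fun x y => P x y ∧ g x = g v ∧ g y = g v) v v := by
  suffices H : ∀ a, Relation.TransGen P a v → g a ≤ g v →
      Relation.TransGen (fun x y => P x y ∧ g x = g a ∧ g y = g a) a v from H v h le_rfl
  intro a ha
  induction ha using Relation.TransGen.head_induction_on with
  | single hrel =>
    intro hle
    exact Relation.TransGen.single ⟨hrel, rfl, le_antisymm (mono _ _ hrel) hle⟩
  | head hrel htg IH =>
    intro hle
    rename_i a' c
    have h1 : g c ≤ g a' := mono _ _ hrel
    have h2 : g v ≤ g c := transGen_le mono htg
    have hca : g c = g a' := le_antisymm h1 (hle.trans h2)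
    have hIH := IH (hca ▸ hle)
    have hIH' : Relation.TransGen (fun x y => P x y ∧ g x = g a' ∧ g y = g a') c v :=
      Relation.TransGen.mono (fun x y hx => ⟨hx.1, hx.2.1.trans hca, hx.2.2.trans hca⟩) _ _ hIH
    exact hIH'.head ⟨hrel, rfl, hca⟩

lemma cycle_eq' {α : Type*} {P : α → α → Prop} {g : α → ℕ}
    (mono : ∀ x y, P x y → g x ≤ g y) {v : α} (h : Relation.TransGen P v v) :
    Relation.TransGen (fun x y => P x y ∧ g x = g v ∧ g y = g v) v v := by
  have hs : Relation.TransGen (Function.swap P) v v := Relation.transGen_swap.mpr h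
  have hc := cycle_eq (P := Function.swap P) (g := g) (fun x y hxy => mono y x hxy) hs
  have hc2 : Relation.TransGen
      (Function.swap fun x y => P x y ∧ g x = g v ∧ g y = g v) v v :=
    Relation.TransGen.mono (fun x y hx => ⟨hx.1, hx.2.2, hx.2.1⟩) _ _ hc
  exact Relation.transGen_swap.mp hc2

lemma contra {H : Fin 4 → Fin 4 → Prop} (hH : IsP4Orientation H)
    (hA : Oriented A) (hfree : Free A H) (v0 v1 v2 v3 : V)
    (d02 : v0 ≠ v2) (d03 : v0 ≠ v3) (d13 : v1 ≠ v3)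
    (e1 : (H 0 1 ∧ A v0 v1) ∨ (H 1 0 ∧ A v1 v0))
    (e2 : (H 1 2 ∧ A v1 v2) ∨ (H 2 1 ∧ A v2 v1))
    (e3 : (H 2 3 ∧ A v2 v3) ∨ (H 3 2 ∧ A v3 v2))
    (n02 : ¬ Adj A v0 v2) (n03 : ¬ Adj A v0 v3) (n13 : ¬ Adj A v1 v3) : False := by
  have d01 : v0 ≠ v1 := by
    rintro rfl; rcases e1 with ⟨-, h⟩ | ⟨-, h⟩ <;> exact not_arc_self hA _ h
  have d12 : v1 ≠ v2 := by
    rintro rfl; rcases e2 with ⟨-, h⟩ | ⟨-, h⟩ <;> exact not_arc_self hA _ h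
  have d23 : v2 ≠ v3 := by
    rintro rfl; rcases e3 with ⟨-, h⟩ | ⟨-, h⟩ <;> exact not_arc_self hA _ h
  have nH : ∀ x y : Fin 4, ¬((x:ℕ)+1 = (y:ℕ) ∨ (y:ℕ)+1 = (x:ℕ)) → ¬ H x y :=
    fun x y hn h => hn ((hH.2 x y).mp (Or.inl h))
  set f : Fin 4 → V := fun i =>
    if i.val = 0 then v0 else if i.val = 1 then v1 else if i.val = 2 then v2 else v3 with hf
  apply hfree
  refine ⟨f, ?_, ?_⟩
  · intro a b hab
    fin_cases a <;> fin_cases b <;> simp only [hf] at hab ⊢ <;>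
      first
      | rfl
      | exact absurd hab d01 | exact absurd hab.symm d01
      | exact absurd hab d02 | exact absurd hab.symm d02
      | exact absurd hab d03 | exact absurd hab.symm d03
      | exact absurd hab d12 | exact absurd hab.symm d12
      | exact absurd hab d13 | exact absurd hab.symm d13
      | exact absurd hab d23 | exact absurd hab.symm d23
  · intro x y
    fin_cases x <;> fin_cases y
    · exact iff_of_false (fun h => hH.1 _ _ h h) (not_arc_self hA _)
    · rcases e1 with ⟨h, a⟩ | ⟨h, a⟩
      · exact iff_of_true h a
      · exact iff_of_false (fun h' => hH.1 _ _ h' h) (fun a' => hA _ _ a' a)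
    · exact iff_of_false (nH 0 2 (by decide)) (fun a => n02 (Or.inl a))
    · exact iff_of_false (nH 0 3 (by decide)) (fun a => n03 (Or.inl a))
    · rcases e1 with ⟨h, a⟩ | ⟨h, a⟩
      · exact iff_of_false (fun h' => hH.1 _ _ h h') (fun a' => hA _ _ a a')
      · exact iff_of_true h a
    · exact iff_of_false (fun h => hH.1 _ _ h h) (not_arc_self hA _)
    · rcases e2 with ⟨h, a⟩ | ⟨h, a⟩
      · exact iff_of_true h a
      · exact iff_of_false (fun h' => hH.1 _ _ h' h) (fun a' => hA _ _ a' a)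
    · exact iff_of_false (nH 1 3 (by decide)) (fun a => n13 (Or.inl a))
    · exact iff_of_false (nH 2 0 (by decide)) (fun a => n02 (Or.inr a))
    · rcases e2 with ⟨h, a⟩ | ⟨h, a⟩
      · exact iff_of_false (fun h' => hH.1 _ _ h h') (fun a' => hA _ _ a a')
      · exact iff_of_true h a
    · exact iff_of_false (fun h => hH.1 _ _ h h) (not_arc_self hA _)
    · rcases e3 with ⟨h, a⟩ | ⟨h, a⟩
      · exact iff_of_true h a
      · exact iff_of_false (fun h' => hH.1 _ _ h' h) (fun a' => hA _ _ a' a)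
    · exact iff_of_false (nH 3 0 (by decide)) (fun a => n03 (Or.inr a))
    · exact iff_of_false (nH 3 1 (by decide)) (fun a => n13 (Or.inr a))
    · rcases e3 with ⟨h, a⟩ | ⟨h, a⟩
      · exact iff_of_false (fun h' => hH.1 _ _ h h') (fun a' => hA _ _ a a')
      · exact iff_of_true h a
    · exact iff_of_false (fun h => hH.1 _ _ h h) (not_arc_self hA _)


/-- the `Q, R, S` lemma: no arc between `Q` and `S`, every vertex of
`R` has an in- and an out-neighbor in `Q`, every vertex of `S` has a neighbor in
`R`, and `χ⃗(N(r)) ≤ γ` for every `r ∈ R`; then `χ⃗(S) ≤ 2γ`. -/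
theorem dichi_QRS {V : Type*} [Fintype V]
    (H : Fin 4 → Fin 4 → Prop) (hH : IsP4Orientation H)
    (A : V → V → Prop) (hA : Oriented A) (hfree : Free A H)
    (Q R S : Set V)
    (hcover : Q ∪ R ∪ S = Set.univ)
    (hQR : Disjoint Q R) (hQS : Disjoint Q S) (hRS : Disjoint R S)
    (hnoarc : ∀ q ∈ Q, ∀ s ∈ S, ¬ Adj A q s)
    (hR : ∀ r ∈ R, (∃ q ∈ Q, A q r) ∧ ∃ q ∈ Q, A r q)
    (hS : ∀ s ∈ S, ∃ r ∈ R, Adj A s r)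
    (γ : ℕ) (hγ : ∀ r ∈ R, dichi A (nbr A r) ≤ γ) :
    dichi A S ≤ 2 * γ := by
  classical
  rcases Set.eq_empty_or_nonempty S with hSemp | hSne
  · have hD : DicolorableOn A S (2*γ) := by
      refine ⟨fun _ => 0, ?_, ?_⟩
      · intro v hv; rw [hSemp] at hv; exact absurd hv (Set.notMem_empty v)
      · intro i v hv
        obtain ⟨b, hb, -⟩ := (Relation.TransGen.head'_iff).mp hv
        have hvS : v ∈ S := hb.1.1
        rw [hSemp] at hvS; exact absurd hvS (Set.notMem_empty v)
    exact Nat.sInf_le hD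
  obtain ⟨s₀, hs₀⟩ := hSne
  obtain ⟨r₀, hr₀R, hr₀adj⟩ := hS s₀ hs₀
  have hγ1 : 1 ≤ γ := by
    by_contra hlt
    obtain ⟨c, hc, -⟩ := exists_dicolor hA (hγ r₀ hr₀R)
    have : c s₀ < γ := hc s₀ (adj_swap hr₀adj)
    omega
  have dQS : ∀ {q s : V}, q ∈ Q → s ∈ S → q ≠ s := by
    rintro q s hq hs rfl; exact Set.disjoint_left.mp hQS hq hs
  have dRS : ∀ {r s : V}, r ∈ R → s ∈ S → r ≠ s := by
    rintro r s hr hs rfl; exact Set.disjoint_left.mp hRS hr hs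
  have hadj01 : H 0 1 ∨ H 1 0 := (hH.2 0 1).mpr (by decide)
  have hadj12 : H 1 2 ∨ H 2 1 := (hH.2 1 2).mpr (by decide)
  have hadj23 : H 2 3 ∨ H 3 2 := (hH.2 2 3).mpr (by decide)
  -- KEY transfer lemmas
  have hK0 : (∀ r s t : V, r ∈ R → s ∈ S → t ∈ S → A r s → A s t → Adj A r t) ∨
             (∀ r s t : V, r ∈ R → s ∈ S → t ∈ S → A r s → A t s → Adj A r t) := by
    rcases hadj12 with h12 | h21
    · rcases hadj23 with h23 | h32
      · left
        intro r s t hrR hsS htS hrs hst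
        by_contra hnadj
        obtain ⟨⟨q, hqQ, hqr⟩, ⟨q', hq'Q, hrq'⟩⟩ := hR r hrR
        rcases hadj01 with h01 | h10
        · exact contra hH hA hfree q r s t (dQS hqQ hsS) (dQS hqQ htS) (dRS hrR htS)
            (Or.inl ⟨h01, hqr⟩) (Or.inl ⟨h12, hrs⟩) (Or.inl ⟨h23, hst⟩)
            (hnoarc q hqQ s hsS) (hnoarc q hqQ t htS) hnadj
        · exact contra hH hA hfree q' r s t (dQS hq'Q hsS) (dQS hq'Q htS) (dRS hrR htS)
            (Or.inr ⟨h10, hrq'⟩) (Or.inl ⟨h12, hrs⟩) (Or.inl ⟨h23, hst⟩)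
            (hnoarc q' hq'Q s hsS) (hnoarc q' hq'Q t htS) hnadj
      · right
        intro r s t hrR hsS htS hrs hts
        by_contra hnadj
        obtain ⟨⟨q, hqQ, hqr⟩, ⟨q', hq'Q, hrq'⟩⟩ := hR r hrR
        rcases hadj01 with h01 | h10
        · exact contra hH hA hfree q r s t (dQS hqQ hsS) (dQS hqQ htS) (dRS hrR htS)
            (Or.inl ⟨h01, hqr⟩) (Or.inl ⟨h12, hrs⟩) (Or.inr ⟨h32, hts⟩)
            (hnoarc q hqQ s hsS) (hnoarc q hqQ t htS) hnadj
        · exact contra hH hA hfree q' r s t (dQS hq'Q hsS) (dQS hq'Q htS) (dRS hrR htS)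
            (Or.inr ⟨h10, hrq'⟩) (Or.inl ⟨h12, hrs⟩) (Or.inr ⟨h32, hts⟩)
            (hnoarc q' hq'Q s hsS) (hnoarc q' hq'Q t htS) hnadj
    · rcases hadj01 with h01 | h10
      · right
        intro r s t hrR hsS htS hrs hts
        by_contra hnadj
        obtain ⟨⟨q, hqQ, hqr⟩, ⟨q', hq'Q, hrq'⟩⟩ := hR r hrR
        rcases hadj23 with h23 | h32
        · exact contra hH hA hfree t s r q' ((dRS hrR htS).symm) ((dQS hq'Q htS).symm)
            ((dQS hq'Q hsS).symm)
            (Or.inl ⟨h01, hts⟩) (Or.inr ⟨h21, hrs⟩) (Or.inl ⟨h23, hrq'⟩)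
            (fun h => hnadj (adj_swap h)) (fun h => hnoarc q' hq'Q t htS (adj_swap h))
            (fun h => hnoarc q' hq'Q s hsS (adj_swap h))
        · exact contra hH hA hfree t s r q ((dRS hrR htS).symm) ((dQS hqQ htS).symm)
            ((dQS hqQ hsS).symm)
            (Or.inl ⟨h01, hts⟩) (Or.inr ⟨h21, hrs⟩) (Or.inr ⟨h32, hqr⟩)
            (fun h => hnadj (adj_swap h)) (fun h => hnoarc q hqQ t htS (adj_swap h))
            (fun h => hnoarc q hqQ s hsS (adj_swap h))
      · left
        intro r s t hrR hsS htS hrs hst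
        by_contra hnadj
        obtain ⟨⟨q, hqQ, hqr⟩, ⟨q', hq'Q, hrq'⟩⟩ := hR r hrR
        rcases hadj23 with h23 | h32
        · exact contra hH hA hfree t s r q' ((dRS hrR htS).symm) ((dQS hq'Q htS).symm)
            ((dQS hq'Q hsS).symm)
            (Or.inr ⟨h10, hst⟩) (Or.inr ⟨h21, hrs⟩) (Or.inl ⟨h23, hrq'⟩)
            (fun h => hnadj (adj_swap h)) (fun h => hnoarc q' hq'Q t htS (adj_swap h))
            (fun h => hnoarc q' hq'Q s hsS (adj_swap h))
        · exact contra hH hA hfree t s r q ((dRS hrR htS).symm) ((dQS hqQ htS).symm)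
            ((dQS hqQ hsS).symm)
            (Or.inr ⟨h10, hst⟩) (Or.inr ⟨h21, hrs⟩) (Or.inr ⟨h32, hqr⟩)
            (fun h => hnadj (adj_swap h)) (fun h => hnoarc q hqQ t htS (adj_swap h))
            (fun h => hnoarc q hqQ s hsS (adj_swap h))
  have hK1 : (∀ r s t : V, r ∈ R → s ∈ S → t ∈ S → A s r → A s t → Adj A r t) ∨
             (∀ r s t : V, r ∈ R → s ∈ S → t ∈ S → A s r → A t s → Adj A r t) := by
    rcases hadj12 with h12 | h21
    · rcases hadj01 with h01 | h10
      · right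
        intro r s t hrR hsS htS hsr hts
        by_contra hnadj
        obtain ⟨⟨q, hqQ, hqr⟩, ⟨q', hq'Q, hrq'⟩⟩ := hR r hrR
        rcases hadj23 with h23 | h32
        · exact contra hH hA hfree t s r q' ((dRS hrR htS).symm) ((dQS hq'Q htS).symm)
            ((dQS hq'Q hsS).symm)
            (Or.inl ⟨h01, hts⟩) (Or.inl ⟨h12, hsr⟩) (Or.inl ⟨h23, hrq'⟩)
            (fun h => hnadj (adj_swap h)) (fun h => hnoarc q' hq'Q t htS (adj_swap h))
            (fun h => hnoarc q' hq'Q s hsS (adj_swap h))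
        · exact contra hH hA hfree t s r q ((dRS hrR htS).symm) ((dQS hqQ htS).symm)
            ((dQS hqQ hsS).symm)
            (Or.inl ⟨h01, hts⟩) (Or.inl ⟨h12, hsr⟩) (Or.inr ⟨h32, hqr⟩)
            (fun h => hnadj (adj_swap h)) (fun h => hnoarc q hqQ t htS (adj_swap h))
            (fun h => hnoarc q hqQ s hsS (adj_swap h))
      · left
        intro r s t hrR hsS htS hsr hst
        by_contra hnadj
        obtain ⟨⟨q, hqQ, hqr⟩, ⟨q', hq'Q, hrq'⟩⟩ := hR r hrR
        rcases hadj23 with h23 | h32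
        · exact contra hH hA hfree t s r q' ((dRS hrR htS).symm) ((dQS hq'Q htS).symm)
            ((dQS hq'Q hsS).symm)
            (Or.inr ⟨h10, hst⟩) (Or.inl ⟨h12, hsr⟩) (Or.inl ⟨h23, hrq'⟩)
            (fun h => hnadj (adj_swap h)) (fun h => hnoarc q' hq'Q t htS (adj_swap h))
            (fun h => hnoarc q' hq'Q s hsS (adj_swap h))
        · exact contra hH hA hfree t s r q ((dRS hrR htS).symm) ((dQS hqQ htS).symm)
            ((dQS hqQ hsS).symm)
            (Or.inr ⟨h10, hst⟩) (Or.inl ⟨h12, hsr⟩) (Or.inr ⟨h32, hqr⟩)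
            (fun h => hnadj (adj_swap h)) (fun h => hnoarc q hqQ t htS (adj_swap h))
            (fun h => hnoarc q hqQ s hsS (adj_swap h))
    · rcases hadj23 with h23 | h32
      · left
        intro r s t hrR hsS htS hsr hst
        by_contra hnadj
        obtain ⟨⟨q, hqQ, hqr⟩, ⟨q', hq'Q, hrq'⟩⟩ := hR r hrR
        rcases hadj01 with h01 | h10
        · exact contra hH hA hfree q r s t (dQS hqQ hsS) (dQS hqQ htS) (dRS hrR htS)
            (Or.inl ⟨h01, hqr⟩) (Or.inr ⟨h21, hsr⟩) (Or.inl ⟨h23, hst⟩)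
            (hnoarc q hqQ s hsS) (hnoarc q hqQ t htS) hnadj
        · exact contra hH hA hfree q' r s t (dQS hq'Q hsS) (dQS hq'Q htS) (dRS hrR htS)
            (Or.inr ⟨h10, hrq'⟩) (Or.inr ⟨h21, hsr⟩) (Or.inl ⟨h23, hst⟩)
            (hnoarc q' hq'Q s hsS) (hnoarc q' hq'Q t htS) hnadj
      · right
        intro r s t hrR hsS htS hsr hts
        by_contra hnadj
        obtain ⟨⟨q, hqQ, hqr⟩, ⟨q', hq'Q, hrq'⟩⟩ := hR r hrR
        rcases hadj01 with h01 | h10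
        · exact contra hH hA hfree q r s t (dQS hqQ hsS) (dQS hqQ htS) (dRS hrR htS)
            (Or.inl ⟨h01, hqr⟩) (Or.inr ⟨h21, hsr⟩) (Or.inr ⟨h32, hts⟩)
            (hnoarc q hqQ s hsS) (hnoarc q hqQ t htS) hnadj
        · exact contra hH hA hfree q' r s t (dQS hq'Q hsS) (dQS hq'Q htS) (dRS hrR htS)
            (Or.inr ⟨h10, hrq'⟩) (Or.inr ⟨h21, hsr⟩) (Or.inr ⟨h32, hts⟩)
            (hnoarc q' hq'Q s hsS) (hnoarc q' hq'Q t htS) hnadj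
  -- per-r colourings
  have hcr : ∀ r : V, ∃ c : V → ℕ, r ∈ R →
      (∀ v ∈ nbr A r, c v < γ) ∧ ∀ i, AcyclicOn A {v | v ∈ nbr A r ∧ c v = i} := by
    intro r
    by_cases hr : r ∈ R
    · obtain ⟨c, h1, h2⟩ := exists_dicolor hA (hγ r hr)
      exact ⟨c, fun _ => ⟨h1, h2⟩⟩
    · exact ⟨fun _ => 0, fun h => absurd h hr⟩
  choose cfun hcfun using hcr
  set emb : V → ℕ := fun v => (Fintype.equivFin V v : ℕ) with hembdef
  have hembInj : Function.Injective emb := fun a b h =>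
    (Fintype.equivFin V).injective (Fin.val_injective h)
  have hselE : ∀ s : V, ∃ r : V,
      s ∈ S → r ∈ R ∧ Adj A s r ∧ ∀ r', r' ∈ R → Adj A s r' → emb r ≤ emb r' := by
    intro s
    by_cases hs : s ∈ S
    · have hne : {n | ∃ r : V, (r ∈ R ∧ Adj A s r) ∧ emb r = n}.Nonempty := by
        obtain ⟨r, hr1, hr2⟩ := hS s hs
        exact ⟨emb r, r, ⟨hr1, hr2⟩, rfl⟩
      obtain ⟨r, ⟨hrR, hradj⟩, hre⟩ := Nat.sInf_mem hne
      refine ⟨r, fun _ => ⟨hrR, hradj, fun r' h1 h2 => ?_⟩⟩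
      rw [hre]
      exact Nat.sInf_le ⟨r', ⟨h1, h2⟩, rfl⟩
    · exact ⟨s, fun h => absurd h hs⟩
  choose rsel hrsel using hselE
  set key : V → ℕ := fun s => emb (rsel s) with hkeydef
  set bit : V → ℕ := fun s => if A (rsel s) s then 0 else 1 with hbitdef
  set col : V → ℕ := fun s => cfun (rsel s) s + γ * bit s with hcoldef
  have hselR : ∀ s ∈ S, rsel s ∈ R := fun s hs => (hrsel s hs).1
  have hselAdj : ∀ s ∈ S, Adj A s (rsel s) := fun s hs => (hrsel s hs).2.1
  have hselMin : ∀ s ∈ S, ∀ r', r' ∈ R → Adj A s r' → key s ≤ emb r' :=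
    fun s hs => (hrsel s hs).2.2
  have hnbmem : ∀ s ∈ S, s ∈ nbr A (rsel s) := fun s hs => adj_swap (hselAdj s hs)
  have hclt : ∀ s ∈ S, cfun (rsel s) s < γ :=
    fun s hs => (hcfun (rsel s) (hselR s hs)).1 s (hnbmem s hs)
  have hbitle : ∀ s : V, bit s = 0 ∨ bit s = 1 := by
    intro s; simp only [hbitdef]; split <;> simp
  have hbit0 : ∀ s : V, bit s = 0 → A (rsel s) s := by
    intro s h
    by_contra h'
    simp only [hbitdef, if_neg h'] at h
    exact absurd h one_ne_zero
  have hbit1 : ∀ s ∈ S, bit s = 1 → A s (rsel s) := by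
    intro s hs h
    by_cases h' : A (rsel s) s
    · simp only [hbitdef, if_pos h'] at h
      exact absurd h zero_ne_one
    · rcases hselAdj s hs with h2 | h2
      · exact h2
      · exact absurd h2 h'
  have hD : DicolorableOn A S (2*γ) := by
    refine ⟨col, ?_, ?_⟩
    · intro v hv
      have h1 := hclt v hv
      rcases hbitle v with hb | hb <;>
        simp only [hcoldef, hb, Nat.mul_zero, Nat.mul_one] <;> omega
    · intro i v hcyc
      have hcyc2 : Relation.TransGen
          (fun x y => (x ∈ S ∧ col x = i) ∧ (y ∈ S ∧ col y = i) ∧ A x y) v v :=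
        Relation.TransGen.mono (fun x y h => ⟨h.1, h.2.1, h.2.2⟩) _ _ hcyc
      have hv : v ∈ S ∧ col v = i := by
        obtain ⟨b, hb, -⟩ := (Relation.TransGen.head'_iff).mp hcyc2
        exact hb.1
      have hsame : ∀ x : V, x ∈ S → col x = i →
          bit x = bit v ∧ cfun (rsel x) x = cfun (rsel v) v := by
        intro x hx hcx
        have h1 := hclt x hx
        have h2 := hclt v hv.1
        have e : cfun (rsel x) x + γ * bit x = cfun (rsel v) v + γ * bit v := by
          have := hcx.trans hv.2.symm
          simpa only [hcoldef] using this
        rcases hbitle x with hbx | hbx <;> rcases hbitle v with hbv | hbv <;>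
          rw [hbx, hbv] at e <;> rw [hbx, hbv] <;>
          exact ⟨by omega, by omega⟩
      have hmono :
          (∀ x y : V, ((x ∈ S ∧ col x = i) ∧ (y ∈ S ∧ col y = i) ∧ A x y) → key y ≤ key x) ∨
          (∀ x y : V, ((x ∈ S ∧ col x = i) ∧ (y ∈ S ∧ col y = i) ∧ A x y) → key x ≤ key y) := by
        rcases hbitle v with hbv | hbv
        · rcases hK0 with hT | hHd
          · left
            rintro x y ⟨⟨hxS, hxc⟩, ⟨hyS, hyc⟩, ha⟩
            have hbx : bit x = 0 := (hsame x hxS hxc).1.trans hbv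
            have hadjr := hT (rsel x) x y (hselR x hxS) hxS hyS (hbit0 x hbx) ha
            exact hselMin y hyS (rsel x) (hselR x hxS) (adj_swap hadjr)
          · right
            rintro x y ⟨⟨hxS, hxc⟩, ⟨hyS, hyc⟩, ha⟩
            have hby : bit y = 0 := (hsame y hyS hyc).1.trans hbv
            have hadjr := hHd (rsel y) y x (hselR y hyS) hyS hxS (hbit0 y hby) ha
            exact hselMin x hxS (rsel y) (hselR y hyS) (adj_swap hadjr)
        · rcases hK1 with hT | hHd
          · left
            rintro x y ⟨⟨hxS, hxc⟩, ⟨hyS, hyc⟩, ha⟩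
            have hbx : bit x = 1 := (hsame x hxS hxc).1.trans hbv
            have hadjr := hT (rsel x) x y (hselR x hxS) hxS hyS (hbit1 x hxS hbx) ha
            exact hselMin y hyS (rsel x) (hselR x hxS) (adj_swap hadjr)
          · right
            rintro x y ⟨⟨hxS, hxc⟩, ⟨hyS, hyc⟩, ha⟩
            have hby : bit y = 1 := (hsame y hyS hyc).1.trans hbv
            have hadjr := hHd (rsel y) y x (hselR y hyS) hyS hxS (hbit1 y hyS hby) ha
            exact hselMin x hxS (rsel y) (hselR y hyS) (adj_swap hadjr)
      have hcc : Relation.TransGen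
          (fun x y => ((x ∈ S ∧ col x = i) ∧ (y ∈ S ∧ col y = i) ∧ A x y) ∧
            key x = key v ∧ key y = key v) v v := by
        rcases hmono with hM | hM
        · exact cycle_eq hM hcyc2
        · exact cycle_eq' hM hcyc2
      have hrvR : rsel v ∈ R := hselR v hv.1
      refine (hcfun (rsel v) hrvR).2 (cfun (rsel v) v) v ?_
      refine Relation.TransGen.mono ?_ _ _ hcc
      rintro x y ⟨⟨⟨hxS, hxc⟩, ⟨hyS, hyc⟩, ha⟩, hkx, hky⟩
      have hrx : rsel x = rsel v := hembInj hkx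
      have hry : rsel y = rsel v := hembInj hky
      have hx1 : x ∈ nbr A (rsel v) := hrx ▸ hnbmem x hxS
      have hy1 : y ∈ nbr A (rsel v) := hry ▸ hnbmem y hyS
      have hx2 : cfun (rsel v) x = cfun (rsel v) v := by
        have h := (hsame x hxS hxc).2; rwa [hrx] at h
      have hy2 : cfun (rsel v) y = cfun (rsel v) v := by
        have h := (hsame y hyS hyc).2; rwa [hry] at h
      exact ⟨⟨hx1, hx2⟩, ⟨hy1, hy2⟩, ha⟩
  exact Nat.sInf_le hD


end DichiP4
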